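/- Equivalence of the two formulations of the Kawashima condition: Let m > n ≥ 1 be integers, let A : ℂ^m → ℂ^m be a Hermitian linear map, and let X ⊆ ℂ^m be a linear subspace with dim X = n. Then the following are equivalent: (a) for every nonzero x ∈ X there exists k ∈ {1, …, n} with A^k x ∉ X; (b) no nonzero eigenvector of A lies in X, i.e., whenever x ∈ X, λ ∈ ℂ and A x = λ x, then x = 0. -/

import Mathlib

noncomputable section

/-- **Equivalence of the two formulations of the Kawashima condition.**
Let `A` be a Hermitian linear map on `ℂ^m` and `X ⊆ ℂ^m` an `n`-dimensional subspace
with `1 ≤ n < m`.  Then: for every nonzero `x ∈ X` there is `k ∈ {1, …, n}` with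
`A^k x ∉ X`, if and only if no nonzero eigenvector of `A` lies in `X`. -/
theorem kawashima_condition_equivalence
    (m n : ℕ) (hn : 1 ≤ n) (hnm : n < m)
    (A : Module.End ℂ (EuclideanSpace ℂ (Fin m)))
    (hA : ∀ u w : EuclideanSpace ℂ (Fin m), (inner ℂ (A u) w : ℂ) = inner ℂ u (A w))
    (X : Submodule ℂ (EuclideanSpace ℂ (Fin m)))
    (hX : Module.finrank ℂ X = n) :
    (∀ x ∈ X, x ≠ 0 → ∃ k : ℕ, 1 ≤ k ∧ k ≤ n ∧ (A ^ k) x ∉ X) ↔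
      (∀ x ∈ X, ∀ c : ℂ, A x = c • x → x = 0) := by
  constructor
  · -- (a) → (b)
    intro h x hx c hAx
    by_contra hx0
    have key : ∀ k : ℕ, (A ^ k) x = c ^ k • x := by
      intro k
      induction k with
      | zero => simp
      | succ j ih =>
        rw [pow_succ, pow_succ, Module.End.mul_apply, hAx, map_smul, ih, smul_smul,
          mul_comm]
    obtain ⟨k, hk1, hkn, hknot⟩ := h x hx hx0
    exact hknot (by rw [key]; exact X.smul_mem _ hx)
  · -- (b) → (a)
    intro hb
    classical
    by_contra hcon
    push_neg at hcon
    obtain ⟨x, hxX, hx0, hpowX⟩ := hcon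
    -- all powers A^k x for 0 ≤ k ≤ n lie in X
    have hpX : ∀ k, k ≤ n → (A ^ k) x ∈ X := by
      intro k hk
      rcases Nat.eq_zero_or_pos k with hk0 | hk1
      · subst hk0; simpa using hxX
      · exact hpowX k hk1 hk
    -- the family of iterates, of each length
    set f : ∀ d : ℕ, Fin d → EuclideanSpace ℂ (Fin m) :=
      fun d j => (A ^ (j : ℕ)) x with hf
    have hsnoc : ∀ d : ℕ, f (d + 1) = Fin.snoc (f d) ((A ^ d) x) := by
      intro d
      funext j
      refine Fin.lastCases ?_ (fun i => ?_) j
      · simp [hf]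
      · simp [hf, Fin.snoc_castSucc]
    -- the family of length n+1 is linearly dependent
    have hdep : ¬ LinearIndependent ℂ (f (n + 1)) := by
      intro hLI
      -- push it into X
      have hmem : ∀ j : Fin (n + 1), f (n + 1) j ∈ X := fun j =>
        hpX j (Nat.lt_succ_iff.mp j.isLt)
      set g : Fin (n + 1) → X := fun j => ⟨f (n + 1) j, hmem j⟩ with hg
      have hgLI : LinearIndependent ℂ g := by
        have : f (n + 1) = X.subtype ∘ g := rfl
        rw [this] at hLI
        exact LinearIndependent.of_comp _ hLI
      have := hgLI.fintype_card_le_finrank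
      rw [hX, Fintype.card_fin] at this
      omega
    -- least d with the (d+1)-family dependent
    have hex : ∃ d, ¬ LinearIndependent ℂ (f (d + 1)) := ⟨n, hdep⟩
    set d := Nat.find hex with hd
    have hdn : d ≤ n := Nat.find_le hdep
    have hdLI : LinearIndependent ℂ (f d) := by
      rcases Nat.eq_zero_or_pos d with h0 | h1
      · rw [h0]
        exact linearIndependent_empty_type
      · have := Nat.find_min hex (m := d - 1) (by omega)
        rw [not_not] at this
        have hdd : d - 1 + 1 = d := by omega
        rwa [hdd] at this
    set W : Submodule ℂ (EuclideanSpace ℂ (Fin m)) :=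
      Submodule.span ℂ (Set.range (f d)) with hW
    have hAdW : (A ^ d) x ∈ W := by
      have hnd : ¬ LinearIndependent ℂ (f (d + 1)) := Nat.find_spec hex
      rw [hsnoc d, linearIndependent_fin_snoc] at hnd
      by_contra hcc
      exact hnd ⟨hdLI, hcc⟩
    -- d ≥ 1, since x ≠ 0
    have hd1 : 1 ≤ d := by
      by_contra hdd
      have hd0 : d = 0 := by omega
      rw [hd0] at hAdW
      have : (A ^ 0) x = x := by simp
      rw [this] at hAdW
      have : Set.range (f 0) = ∅ := by
        simp [Set.range_eq_empty]
      rw [hW, hd0, this, Submodule.span_empty, Submodule.mem_bot] at hAdW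
      exact hx0 hAdW
    -- W is A-invariant
    have hAW : ∀ w ∈ W, A w ∈ W := by
      intro w hw
      induction hw using Submodule.span_induction with
      | mem y hy =>
        obtain ⟨j, rfl⟩ := hy
        have : A ((A ^ (j : ℕ)) x) = (A ^ ((j : ℕ) + 1)) x := by
          rw [pow_succ']; rfl
        rw [this]
        rcases Nat.lt_or_ge ((j : ℕ) + 1) d with hlt | hge
        · exact Submodule.subset_span ⟨⟨(j : ℕ) + 1, hlt⟩, rfl⟩
        · have : (j : ℕ) + 1 = d := by
            have := j.isLt; omega
          rw [this]; exact hAdW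
      | zero => simp
      | add y z _ _ hy hz => rw [map_add]; exact W.add_mem hy hz
      | smul c y _ hy => rw [map_smul]; exact W.smul_mem c hy
    have hxW : x ∈ W := by
      have : x = f d ⟨0, by omega⟩ := by simp [hf]
      rw [this]
      exact Submodule.subset_span ⟨_, rfl⟩
    have hWX : W ≤ X := by
      rw [hW, Submodule.span_le]
      rintro y ⟨j, rfl⟩
      exact hpX (j : ℕ) (by have := j.isLt; omega)
    -- restrict A to W and find an eigenvector
    have hres : ∀ w ∈ W, A w ∈ W := hAW
    set A' : Module.End ℂ W := A.restrict hres with hA'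
    haveI : Nontrivial W := by
      refine nontrivial_of_ne ⟨x, hxW⟩ 0 ?_
      simp only [ne_eq, Submodule.mk_eq_zero]
      exact hx0
    obtain ⟨c, hc⟩ := Module.End.exists_eigenvalue A'
    obtain ⟨v, hv⟩ := hc.exists_hasEigenvector
    have hveq : A (v : EuclideanSpace ℂ (Fin m)) = c • (v : EuclideanSpace ℂ (Fin m)) := by
      have := hv.apply_eq_smul
      have h2 : (A' v : EuclideanSpace ℂ (Fin m)) = A (v : EuclideanSpace ℂ (Fin m)) := rfl
      rw [← h2, this]
      simp
    have hv0 : (v : EuclideanSpace ℂ (Fin m)) = 0 :=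
      hb _ (hWX v.2) c hveq
    exact hv.right (by simpa using hv0)
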